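/- arXiv:2208.05131 — 2 statements merged into one kernel-verified Lean document; each statement's English description precedes it below -/
import Mathlib

section
/- Under the hypotheses of the energy-function soundness lemma (initial energy 0, energy decrease bounded by weighted edit distance along each transition, nonnegative energy at reachable triples with accepting P-state), for every run q0_T → q^1 → ⋯ → q^n of T on a string a_0⋯a_{n−1} ∈ L(P), the sum Σ_{i<n} wed(q^i, a_i) is nonnegative, where wed(q, c) = d − ed(c, δout(q, c)). -/
/-- Costs for the Levenshtein edit distance (formerly in Mathlib, `Mathlib.Data.List.EditDistance.Defs`). -/
structure Levenshtein.Cost (α β δ : Type*) where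
  delete : α → δ
  insert : β → δ
  substitute : α → β → δ

/-- The default unit costs (formerly in Mathlib). -/
def Levenshtein.defaultCost {α : Type*} [DecidableEq α] : Levenshtein.Cost α α ℕ where
  delete _ := 1
  insert _ := 1
  substitute a b := if a = b then 0 else 1

/-- The Levenshtein edit distance (formerly in Mathlib), by its defining recursion. -/
def levenshtein {α β δ : Type*} [AddZeroClass δ] [Min δ] (C : Levenshtein.Cost α β δ) :
    List α → List β → δ
  | [], [] => 0
  | x :: xs, [] => C.delete x + levenshtein C xs []
  | [], y :: ys => C.insert y + levenshtein C [] ys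
  | x :: xs, y :: ys =>
    min (C.delete x + levenshtein C xs (y :: ys))
      (min (C.insert y + levenshtein C (x :: xs) ys) (C.substitute x y + levenshtein C xs ys))

/-- Edit distance between two strings (lists), with unit insertion/deletion/substitution cost. -/
def ed {A : Type*} [DecidableEq A] (s t : List A) : ℕ :=
  levenshtein Levenshtein.defaultCost s t

/-- A total finite state transducer. -/
structure FT (Q A : Type*) where
  step : Q → A → Q
  out : Q → A → List A
  start : Q

namespace FT

variable {Q A : Type*} (T : FT Q A)

/-- Extended state-transition function. -/
def stepList : Q → List A → Q
  | q, [] => q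
  | q, a :: u => stepList (T.step q a) u

/-- Extended output function. -/
def outList : Q → List A → List A
  | _, [] => []
  | q, a :: u => T.out q a ++ outList (T.step q a) u

/-- The output of the transducer on a word. -/
def output (w : List A) : List A := T.outList T.start w

/-- Aggregate cost of `T` on a word, starting from state `q`. -/
def aggCost [DecidableEq A] : Q → List A → ℕ
  | _, [] => 0
  | q, a :: u => ed [a] (T.out q a) + aggCost (T.step q a) u

end FT

/-- The sum of `wed` along the run of `T` on a word, starting from state `q`. -/
def FT.wedSum {Q A : Type*} (T : FT Q A) (wed : Q → A → ℚ) : Q → List A → ℚ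
  | _, [] => 0
  | q, a :: u => wed q a + FT.wedSum T wed (T.step q a) u

/-- Under the energy-function hypotheses, the sum of weighted edit distances along the run
of `T` on any string accepted by `P` is nonnegative. -/
theorem wed_sum_nonneg {A SP SQ Q : Type*} [DecidableEq A]
    (P : DFA A SP) (Qd : DFA A SQ) (T : FT Q A) (d : ℚ)
    (wed : Q → A → ℚ) (en : SP → Q → SQ → ℚ)
    (hwed : ∀ q c, wed q c = d - ed [c] (T.out q c))
    (h1 : en P.start T.start Qd.start = 0)
    (h2 : ∀ p q r (c : A),
      en p q r ≥ en (P.step p c) (T.step q c) (Qd.evalFrom r (T.out q c)) - wed q c)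
    (h3 : ∀ p q r,
      (∃ w : List A, P.evalFrom P.start w = p ∧ T.stepList T.start w = q ∧
        Qd.evalFrom Qd.start (T.outList T.start w) = r) →
      p ∈ P.accept → en p q r ≥ 0) :
    ∀ w : List A, P.evalFrom P.start w ∈ P.accept →
      0 ≤ T.wedSum wed T.start w := by
  have key : ∀ (w : List A) p q r,
      en (P.evalFrom p w) (T.stepList q w) (Qd.evalFrom r (T.outList q w)) ≤
        en p q r + T.wedSum wed q w := by
    intro w
    induction w with
    | nil => intro p q r; simp [FT.stepList, FT.outList, FT.wedSum, DFA.evalFrom]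
    | cons a u ih =>
      intro p q r
      have := ih (P.step p a) (T.step q a) (Qd.evalFrom r (T.out q a))
      simp only [FT.stepList, FT.outList, FT.wedSum, DFA.evalFrom, List.foldl_cons,
        List.foldl_append] at *
      have h := h2 p q r a
      linarith
  intro w hw
  have hk := key w P.start T.start Qd.start
  rw [h1] at hk
  have hen := h3 (P.evalFrom P.start w) (T.stepList T.start w)
      (Qd.evalFrom Qd.start (T.outList T.start w)) ⟨w, rfl, rfl, rfl⟩ hw
  linarith
end

section
/- If two total finite state transducers T1 and T2 (with finitely many states over a finite alphabet) compute different functions on Σ*, then there exists a string w of length at most |Q_{T1}| · |Q_{T2}| · (max(l_1, l_2) + 2) such that T1(w) ≠ T2(w), where l_i is the maximum transition-output length of T_i. -/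
namespace FT

variable {Q A : Type*} (T : FT Q A)

theorem stepList_append (q : Q) (u v : List A) :
    T.stepList q (u ++ v) = T.stepList (T.stepList q u) v := by
  induction u generalizing q with
  | nil => rfl
  | cons a u ih => simp [stepList, ih]

theorem outList_append (q : Q) (u v : List A) :
    T.outList q (u ++ v) = T.outList q u ++ T.outList (T.stepList q u) v := by
  induction u generalizing q with
  | nil => rfl
  | cons a u ih => simp [outList, stepList, ih]

end FT

/-- Short-witness bound for inequivalence of total transducers: if `T1` and `T2` compute
different functions, they differ on a string of length at most
`|Q1| * |Q2| * (max l1 l2 + 2)`. -/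
theorem short_witness_inequivalence {Q1 Q2 A : Type*}
    [Fintype Q1] [Fintype Q2] [Fintype A]
    (T1 : FT Q1 A) (T2 : FT Q2 A) (l1 l2 : ℕ)
    (hl1 : ∀ q c, (T1.out q c).length ≤ l1)
    (hl2 : ∀ q c, (T2.out q c).length ≤ l2)
    (hne : ∃ w : List A, T1.output w ≠ T2.output w) :
    ∃ w : List A,
      w.length ≤ Fintype.card Q1 * Fintype.card Q2 * (max l1 l2 + 2) ∧
      T1.output w ≠ T2.output w := by
  classical
  set N := Fintype.card Q1 * Fintype.card Q2 with hN
  have hP : ∃ n : ℕ, ∃ w : List A, w.length = n ∧ T1.output w ≠ T2.output w := by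
    obtain ⟨w, hw⟩ := hne
    exact ⟨w.length, w, rfl, hw⟩
  set n := Nat.find hP with hn
  obtain ⟨w, hwlen, hwne⟩ := Nat.find_spec hP
  -- minimality: any shorter word gives equal outputs
  have hmin : ∀ u : List A, u.length < n → T1.output u = T2.output u := by
    intro u hu
    by_contra h
    exact Nat.find_min hP hu ⟨u, rfl, h⟩
  -- main claim: n ≤ N
  have hle : n ≤ N := by
    by_contra hle
    push_neg at hle
    set f : Fin n → Q1 × Q2 := fun k =>
      (T1.stepList T1.start (w.take k), T2.stepList T2.start (w.take k)) with hf
    have hcard : Fintype.card (Q1 × Q2) < Fintype.card (Fin n) := by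
      simpa [hN] using hle
    obtain ⟨i, j, hij, hfeq⟩ := Fintype.exists_ne_map_eq_of_card_lt f hcard
    -- wlog i < j
    wlog hlt : (i : ℕ) < (j : ℕ) generalizing i j
    · exact this j i hij.symm hfeq.symm
        (by rcases lt_or_gt_of_ne (fun h => hij (Fin.ext h) : (i:ℕ) ≠ (j:ℕ)) with h | h
            · exact absurd h hlt
            · exact h)
    have hj : (j : ℕ) < n := j.isLt
    have hs1 : T1.stepList T1.start (w.take i) = T1.stepList T1.start (w.take j) :=
      congrArg Prod.fst hfeq
    have hs2 : T2.stepList T2.start (w.take i) = T2.stepList T2.start (w.take j) :=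
      congrArg Prod.snd hfeq
    -- decompose outputs of w at position j
    have hdec1 : T1.output w
        = T1.output (w.take j) ++ T1.outList (T1.stepList T1.start (w.take j)) (w.drop j) := by
      conv_lhs => rw [FT.output, ← List.take_append_drop (j : ℕ) w, T1.outList_append]
      rfl
    have hdec2 : T2.output w
        = T2.output (w.take j) ++ T2.outList (T2.stepList T2.start (w.take j)) (w.drop j) := by
      conv_lhs => rw [FT.output, ← List.take_append_drop (j : ℕ) w, T2.outList_append]
      rfl
    have htakej : T1.output (w.take j) = T2.output (w.take j) := by
      apply hmin
      rw [List.length_take, hwlen]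
      omega
    have hsuf : T1.outList (T1.stepList T1.start (w.take j)) (w.drop j)
        ≠ T2.outList (T2.stepList T2.start (w.take j)) (w.drop j) := by
      intro h
      apply hwne
      rw [hdec1, hdec2, htakej, h]
    -- the shorter witness
    set w' : List A := w.take i ++ w.drop j with hw'
    have hout1 : T1.output w'
        = T1.output (w.take i) ++ T1.outList (T1.stepList T1.start (w.take j)) (w.drop j) := by
      rw [hw', FT.output, T1.outList_append, hs1]; rfl
    have hout2 : T2.output w'
        = T2.output (w.take i) ++ T2.outList (T2.stepList T2.start (w.take j)) (w.drop j) := by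
      rw [hw', FT.output, T2.outList_append, hs2]; rfl
    have htakei : T1.output (w.take i) = T2.output (w.take i) := by
      apply hmin
      rw [List.length_take, hwlen]
      omega
    have hne' : T1.output w' ≠ T2.output w' := by
      intro h
      apply hsuf
      rw [hout1, hout2, htakei] at h
      exact List.append_cancel_left h
    have hlen' : w'.length < n := by
      rw [hw', List.length_append, List.length_take, List.length_drop, hwlen]
      omega
    exact Nat.find_min hP hlen' ⟨w', rfl, hne'⟩
  refine ⟨w, ?_, hwne⟩
  calc w.length = n := hwlen
    _ ≤ N := hle
    _ ≤ N * (max l1 l2 + 2) := Nat.le_mul_of_pos_right _ (by positivity)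
end
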